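/- Let (λ, h, a, π) be a zippered rectangle and define δ_i = a_{i−1} − a_i for i = 1,…,m (with a₀ = a_{m+1} = 0). Then the map (λ, h, a, π) ↦ (λ, π, δ) is injective: the data (λ, π, δ) determine h and a uniquely, via the formulas a_i = −(δ₁ + ⋯ + δ_i) and h_r = −Σ_{i=1}^{r−1} δ_i + Σ_{l=1}^{π(r)−1} δ_{π⁻¹(l)}. -/
import Mathlib


open Finset

/-- The δ-coordinates determine a zippered rectangle: if `(λ, h, a, π)` satisfies
the zippered-rectangle equations
`h_i − a_i = h_{π⁻¹(π(i)+1)} − a_{π⁻¹(π(i)+1)−1}` for `i = 0,…,m` (with the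
conventions `a₀ = h₀ = a_{m+1} = h_{m+1} = 0`, `π(0) = 0`, `π⁻¹(m+1) = m+1`) and
`δ_i = a_{i−1} − a_i`, then `a` and `h` are given by the explicit formulas
`a_i = −(δ₁ + ⋯ + δ_i)` and
`h_r = −∑_{i=1}^{r−1} δ_i + ∑_{l=1}^{π(r)−1} δ_{π⁻¹(l)}`.
In particular the map `(λ, h, a, π) ↦ (λ, π, δ)` is injective.
Indices are 1-based; `π` and its inverse `πinv` act on `{1,…,m}`. -/
theorem zippered_rectangle_determined_by_delta (m : ℕ) (hm : 0 < m)
    (π πinv : ℕ → ℕ)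
    (hπmap : ∀ i, 1 ≤ i → i ≤ m → 1 ≤ π i ∧ π i ≤ m)
    (hπ0 : π 0 = 0)
    (hinvl : ∀ i, i ≤ m → πinv (π i) = i)
    (hinvr : ∀ i, 1 ≤ i → i ≤ m → π (πinv i) = i ∧ 1 ≤ πinv i ∧ πinv i ≤ m)
    (hinvtop : πinv (m + 1) = m + 1)
    (h a δ : ℕ → ℝ)
    (ha0 : a 0 = 0) (hh0 : h 0 = 0) (hatop : a (m + 1) = 0) (hhtop : h (m + 1) = 0)
    (hzip : ∀ i, i ≤ m →
      h i - a i = h (πinv (π i + 1)) - a (πinv (π i + 1) - 1))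
    (hδ : ∀ i, 1 ≤ i → i ≤ m → δ i = a (i - 1) - a i) :
    (∀ i, 1 ≤ i → i ≤ m → a i = -(∑ k ∈ Finset.Icc 1 i, δ k)) ∧
    (∀ r, 1 ≤ r → r ≤ m →
      h r = -(∑ i ∈ Finset.Icc 1 (r - 1), δ i)
        + ∑ l ∈ Finset.Icc 1 (π r - 1), δ (πinv l)) := by

  have haux : ∀ i, i ≤ m → a i = -(∑ k ∈ Finset.Icc 1 i, δ k) := by
    intro i
    induction i with
    | zero => intro _; simp [ha0]
    | succ n ih =>
      intro hle
      have hn : n ≤ m := Nat.le_of_succ_le hle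
      have h1 : δ (n + 1) = a n - a (n + 1) := by
        simpa using hδ (n + 1) (Nat.le_add_left 1 n) hle
      have hsum : ∑ k ∈ Finset.Icc 1 (n + 1), δ k
          = (∑ k ∈ Finset.Icc 1 n, δ k) + δ (n + 1) :=
        Finset.sum_Icc_succ_top (Nat.le_add_left 1 n) δ
      have := ih hn
      rw [hsum]
      linarith
  refine ⟨fun i h1 h2 => haux i h2, ?_⟩
  have key : ∀ j, 1 ≤ j → j ≤ m →
      h (πinv j) - a (πinv j - 1) = ∑ l ∈ Finset.Icc 1 (j - 1), δ (πinv l) := by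
    intro j
    induction j with
    | zero => intro h1; omega
    | succ n ih =>
      intro _ hle
      rcases Nat.eq_zero_or_pos n with hn0 | hn1
      · subst hn0
        have := hzip 0 (Nat.zero_le m)
        rw [hπ0, ha0, hh0] at this
        simp only [Nat.add_sub_cancel]
        simp
        linarith
      · have hnm : n ≤ m := Nat.le_of_succ_le hle
        obtain ⟨hπinv, hinv1, hinvm⟩ := hinvr n hn1 hnm
        have hz := hzip (πinv n) hinvm
        rw [hπinv] at hz
        have hδn : δ (πinv n) = a (πinv n - 1) - a (πinv n) := hδ (πinv n) hinv1 hinvm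
        have hIH := ih hn1 hnm
        have hsum : ∑ l ∈ Finset.Icc 1 n, δ (πinv l)
            = (∑ l ∈ Finset.Icc 1 (n - 1), δ (πinv l)) + δ (πinv n) := by
          have : n - 1 + 1 = n := Nat.succ_pred_eq_of_pos hn1
          rw [← this, Finset.sum_Icc_succ_top (by omega)]
          rw [this]
        simp only [Nat.add_sub_cancel]
        rw [hsum, ← hIH]
        linarith
  intro r hr1 hrm
  obtain ⟨hπ1, hπm⟩ := hπmap r hr1 hrm
  have hk := key (π r) hπ1 hπm
  rw [hinvl r hrm] at hk
  have har : a (r - 1) = -(∑ i ∈ Finset.Icc 1 (r - 1), δ i) := haux (r - 1) (by omega)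
  linarith
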